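/- If S = ∞, then there exists a constant C > 0 such that f(z) ≥ C(√z − 1) for all z > 0. -/

import Mathlib

open MeasureTheory Set Filter Topology

/-- For `S = ∞` and `m` satisfying (M) on `(0,∞)`, with
`f(z) := ∫₀^z √(2/m(r)) dr`, there exists `C > 0` such that `f(z) ≥ C(√z − 1)`
for all `z > 0`. -/
theorem f_lower_bound_sqrt
    (m : ℝ → ℝ)
    (hm_c2 : ContDiffOn ℝ 2 m (Ioi 0))
    (hm_pos : ∀ z : ℝ, 0 < z → 0 < m z)
    (hm_conc : ∀ z : ℝ, 0 < z → deriv (deriv m) z ≤ 0)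
    (hm0 : Tendsto m (𝓝[>] (0 : ℝ)) (𝓝 0)) :
    ∃ C : ℝ, 0 < C ∧ ∀ z : ℝ, 0 < z →
      C * (Real.sqrt z - 1) ≤ ∫ r in Ioo (0 : ℝ) z, Real.sqrt (2 / m r) := by
  have hm1 : 0 < m 1 := hm_pos 1 one_pos
  have hsqrt4 : Real.sqrt 4 = 2 := by
    rw [show (4:ℝ) = 2^2 by norm_num, Real.sqrt_sq (by norm_num : (0:ℝ) ≤ 2)]
  -- concavity of m on (0, ∞)
  have hconc : ConcaveOn ℝ (Ioi (0:ℝ)) m := by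
    apply concaveOn_of_deriv2_nonpos (convex_Ioi 0) hm_c2.continuousOn
    · rw [interior_Ioi]
      exact hm_c2.differentiableOn (by norm_num)
    · rw [interior_Ioi]
      exact (hm_c2.deriv_of_isOpen (m := 1) isOpen_Ioi (by norm_num)).differentiableOn (by norm_num)
    · rw [interior_Ioi]
      intro x hx
      exact hm_conc x hx
  -- lower bound for m near 0
  have hlow : ∀ r : ℝ, 0 < r → r ≤ 1 → r / 2 * m 1 ≤ m r := by
    intro r hr hr1
    have h2r : (0:ℝ) < 2 - r := by linarith
    have ha : (0:ℝ) ≤ (2 - 2*r)/(2 - r) := div_nonneg (by linarith) (by linarith)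
    have hb : (0:ℝ) ≤ r/(2 - r) := div_nonneg (by linarith) (by linarith)
    have hab : (2 - 2*r)/(2 - r) + r/(2 - r) = 1 := by
      rw [← add_div, div_eq_one_iff_eq h2r.ne']; ring
    have key := hconc.2 (show r/2 ∈ Ioi (0:ℝ) from by simpa using by linarith)
      (show (1:ℝ) ∈ Ioi (0:ℝ) by norm_num) ha hb hab
    simp only [smul_eq_mul, mul_one] at key
    have hcomb : (2 - 2*r)/(2 - r) * (r/2) + r/(2 - r) = r := by
      rw [div_mul_eq_mul_div, ← add_div, div_eq_iff h2r.ne']; ring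
    rw [hcomb] at key
    rw [div_mul_eq_mul_div, div_mul_eq_mul_div, ← add_div, div_le_iff₀ h2r] at key
    have hmr2 : 0 < m (r/2) := hm_pos _ (by linarith)
    nlinarith [mul_pos hr (hm_pos r hr), mul_nonneg (by linarith : (0:ℝ) ≤ 2 - 2*r) hmr2.le]
  -- upper bound for m on [1, ∞)
  have hup : ∀ r : ℝ, 1 ≤ r → m r ≤ 2 * r * m 1 := by
    intro r hr
    have h2r : (0:ℝ) < 2*r - 1 := by linarith
    have ha : (0:ℝ) ≤ (2*r - 2)/(2*r - 1) := div_nonneg (by linarith) (by linarith)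
    have hb : (0:ℝ) ≤ 1/(2*r - 1) := div_nonneg (by linarith) (by linarith)
    have hab : (2*r - 2)/(2*r - 1) + 1/(2*r - 1) = 1 := by
      rw [← add_div, div_eq_one_iff_eq h2r.ne']; ring
    have key := hconc.2 (show (1:ℝ)/2 ∈ Ioi (0:ℝ) by norm_num)
      (show r ∈ Ioi (0:ℝ) from by simpa using by linarith) ha hb hab
    simp only [smul_eq_mul, one_mul] at key
    have hcomb : (2*r - 2)/(2*r - 1) * (1/2) + 1/(2*r - 1) * r = 1 := by
      rw [div_mul_eq_mul_div, div_mul_eq_mul_div, ← add_div,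
        div_eq_one_iff_eq h2r.ne']; ring
    rw [hcomb] at key
    rw [div_mul_eq_mul_div, div_mul_eq_mul_div, ← add_div, div_le_iff₀ h2r] at key
    have hm12 : 0 < m (1/2) := hm_pos _ (by norm_num)
    nlinarith [mul_nonneg (by linarith : (0:ℝ) ≤ 2*r - 2) hm12.le]
  -- continuity of the integrand
  have hgc : ContinuousOn (fun r => Real.sqrt (2 / m r)) (Ioi (0:ℝ)) :=
    (continuousOn_const.div hm_c2.continuousOn (fun x hx => (hm_pos x hx).ne')).sqrt
  -- rpow fact
  have hrpow : ∀ r : ℝ, 0 < r → r ^ (-(1:ℝ)/2) = (Real.sqrt r)⁻¹ := by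
    intro r hr
    rw [Real.sqrt_eq_rpow, ← Real.rpow_neg hr.le]
    norm_num
  -- integrability on (0, z)
  have hInt : ∀ z : ℝ, 0 < z → IntegrableOn (fun r => Real.sqrt (2 / m r)) (Ioo 0 z) := by
    intro z hz
    have hsub : Ioo (0:ℝ) z ⊆ Ioo 0 1 ∪ Icc 1 (max 1 z) := by
      intro r hr
      rcases lt_or_ge r 1 with h | h
      · exact Or.inl ⟨hr.1, h⟩
      · exact Or.inr ⟨h, le_trans hr.2.le (le_max_right _ _)⟩
    have hIcc : IntegrableOn (fun r => Real.sqrt (2 / m r)) (Icc 1 (max 1 z)) :=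
      (hgc.mono (fun x hx => lt_of_lt_of_le one_pos hx.1)).integrableOn_Icc
    have hbfun : IntegrableOn (fun r : ℝ => (2/Real.sqrt (m 1)) * r ^ (-(1:ℝ)/2)) (Ioo 0 1) := by
      have h1 : IntervalIntegrable (fun r : ℝ => r ^ (-(1:ℝ)/2)) volume 0 1 :=
        intervalIntegral.intervalIntegrable_rpow' (by norm_num)
      have h2 := h1.const_mul (2/Real.sqrt (m 1))
      rw [intervalIntegrable_iff_integrableOn_Ioo_of_le (by norm_num)] at h2
      exact h2
    have hmeas : AEStronglyMeasurable (fun r => Real.sqrt (2/m r)) (volume.restrict (Ioo (0:ℝ) 1)) :=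
      (hgc.mono Ioo_subset_Ioi_self).aestronglyMeasurable measurableSet_Ioo
    have hIoo : IntegrableOn (fun r => Real.sqrt (2 / m r)) (Ioo 0 1) := by
      apply Integrable.mono' hbfun hmeas
      filter_upwards [ae_restrict_mem measurableSet_Ioo] with r hr
      have hr0 : 0 < r := hr.1
      have hr1 : r < 1 := hr.2
      rw [Real.norm_of_nonneg (Real.sqrt_nonneg _)]
      have h1 : 2 / m r ≤ 4 / (m 1 * r) := by
        rw [div_le_div_iff₀ (hm_pos r hr0) (by positivity)]
        nlinarith [hlow r hr0 hr1.le]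
      calc Real.sqrt (2 / m r) ≤ Real.sqrt (4 / (m 1 * r)) := Real.sqrt_le_sqrt h1
        _ = 2 / Real.sqrt (m 1) * r ^ (-(1:ℝ)/2) := by
            rw [hrpow r hr0, div_eq_mul_inv, Real.sqrt_mul (by norm_num : (0:ℝ) ≤ 4),
              Real.sqrt_inv, Real.sqrt_mul hm1.le, hsqrt4, mul_inv, div_eq_mul_inv]
            ring
    exact (hIoo.union hIcc).mono_set hsub
  refine ⟨2 / Real.sqrt (m 1), by positivity, ?_⟩
  intro z hz
  have hnn : 0 ≤ ∫ r in Ioo (0:ℝ) z, Real.sqrt (2/m r) :=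
    setIntegral_nonneg measurableSet_Ioo (fun r _ => Real.sqrt_nonneg _)
  rcases le_or_gt z 1 with hz1 | hz1
  · have h1 : Real.sqrt z ≤ 1 := by
      rw [show (1:ℝ) = Real.sqrt 1 by simp]
      exact Real.sqrt_le_sqrt hz1
    have h2 : 2 / Real.sqrt (m 1) * (Real.sqrt z - 1) ≤ 0 :=
      mul_nonpos_of_nonneg_of_nonpos (by positivity) (by linarith)
    linarith
  · -- z > 1
    have hIntlow : IntegrableOn (fun r : ℝ => (Real.sqrt (m 1))⁻¹ * r ^ (-(1:ℝ)/2)) (Ioo 1 z) := by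
      have h1 : IntervalIntegrable (fun r : ℝ => r ^ (-(1:ℝ)/2)) volume 1 z :=
        intervalIntegral.intervalIntegrable_rpow' (by norm_num)
      have h2 := h1.const_mul (Real.sqrt (m 1))⁻¹
      rw [intervalIntegrable_iff_integrableOn_Ioo_of_le hz1.le] at h2
      exact h2
    have hIntg : IntegrableOn (fun r => Real.sqrt (2 / m r)) (Ioo 1 z) :=
      (hInt z hz).mono_set (Ioo_subset_Ioo zero_le_one le_rfl)
    have key2 : ∫ r in Ioo (1:ℝ) z, (Real.sqrt (m 1))⁻¹ * r ^ (-(1:ℝ)/2)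
        ≤ ∫ r in Ioo (1:ℝ) z, Real.sqrt (2 / m r) := by
      apply setIntegral_mono_on hIntlow hIntg measurableSet_Ioo
      intro r hr
      have hr1 : 1 < r := hr.1
      have hr0 : 0 < r := lt_trans one_pos hr1
      have h1 : 1 / (m 1 * r) ≤ 2 / m r := by
        rw [div_le_div_iff₀ (by positivity) (hm_pos r hr0)]
        nlinarith [hup r hr1.le]
      calc (Real.sqrt (m 1))⁻¹ * r ^ (-(1:ℝ)/2)
          = Real.sqrt (1 / (m 1 * r)) := by
            rw [hrpow r hr0, one_div, Real.sqrt_inv, Real.sqrt_mul hm1.le, mul_inv]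
        _ ≤ Real.sqrt (2 / m r) := Real.sqrt_le_sqrt h1
    have key1 : ∫ r in Ioo (1:ℝ) z, Real.sqrt (2 / m r)
        ≤ ∫ r in Ioo (0:ℝ) z, Real.sqrt (2 / m r) := by
      apply setIntegral_mono_set (hInt z hz)
        (Filter.Eventually.of_forall (fun r => Real.sqrt_nonneg _))
      exact HasSubset.Subset.eventuallyLE (Ioo_subset_Ioo zero_le_one le_rfl)
    have hcomp : ∫ r in Ioo (1:ℝ) z, (Real.sqrt (m 1))⁻¹ * r ^ (-(1:ℝ)/2)
        = 2 / Real.sqrt (m 1) * (Real.sqrt z - 1) := by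
      rw [← MeasureTheory.integral_Ioc_eq_integral_Ioo,
        ← intervalIntegral.integral_of_le hz1.le,
        intervalIntegral.integral_const_mul,
        integral_rpow (Or.inl (by norm_num))]
      rw [show (-(1:ℝ)/2 + 1) = 1/2 by norm_num, Real.one_rpow, ← Real.sqrt_eq_rpow]
      have hs : Real.sqrt (m 1) ≠ 0 := by positivity
      field_simp
    linarith
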